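/- Suppose U is a countably complete ultrafilter whose ultrapower embedding j_U has a critical point. Then U is not internal to itself: there is no sequence of countably complete ultrafilters ⟨U_y : y ∈ Y⟩ (where Y is the underlying set of U) such that for all relations R ⊆ X × Y, (∀^U x ∀^U y R(x,y)) ⟺ (∀^U y ∀^{U_y} x R(x,y)). -/

import Mathlib

/-- An ultrafilter is countably complete if it is closed under countable intersections. -/
def CComplete {T : Type*} (U : Ultrafilter T) : Prop :=
  ∀ f : ℕ → Set T, (∀ n, f n ∈ U) → (⋂ n, f n) ∈ U

/-- If `U` is a countably complete ultrafilter whose ultrapower embedding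
has a critical point (i.e. `U` is `κ`-complete but not `κ⁺`-complete for some cardinal `κ`),
then `U` is not internal to itself: there is no sequence `⟨U_y : y ∈ X⟩` of countably
complete ultrafilters such that for every relation `R ⊆ X × X`,
`(∀^U x ∀^U y R(x,y)) ↔ (∀^U y ∀^{U_y} x R(x,y))`. -/
theorem stmt7 {X : Type u} (U : Ultrafilter X) (hcc : CComplete U) (κ : Cardinal.{u})
    (hcomp : ∀ (ι : Type u) (f : ι → Set X),
      Cardinal.mk ι < κ → (∀ i, f i ∈ U) → (⋂ i, f i) ∈ U)
    (hnot : ¬ ∀ (ι : Type u) (f : ι → Set X),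
      Cardinal.mk ι < Order.succ κ → (∀ i, f i ∈ U) → (⋂ i, f i) ∈ U) :
    ¬ ∃ Z : X → Ultrafilter X, (∀ y, CComplete (Z y)) ∧
      ∀ R : X → X → Prop,
        ({x | {y | R x y} ∈ U} ∈ U ↔ {y | {x | R x y} ∈ Z y} ∈ U) := by
  classical
  rintro ⟨Z, hZcc, hswap⟩
  -- Step 0: the "limit" property: A ∈ U ↔ {y | A ∈ Z y} ∈ U
  have star : ∀ A : Set X, A ∈ U ↔ {y | A ∈ Z y} ∈ U := by
    intro A
    have h := hswap fun x _ => x ∈ A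
    have h1 : {x | {y | x ∈ A} ∈ U} = A := by
      ext x
      simp only [Set.mem_setOf_eq]
      by_cases hx : x ∈ A
      · have he : {_y : X | x ∈ A} = Set.univ := by simp [hx]
        rw [he]
        exact iff_of_true Filter.univ_mem hx
      · have he : {_y : X | x ∈ A} = ∅ := by simp [hx]
        rw [he]
        exact iff_of_false U.empty_notMem hx
    have h2 : {y | {x | x ∈ A} ∈ Z y} = {y | A ∈ Z y} := by
      simp [Set.setOf_mem_eq]
    rw [h1, h2] at h
    exact h
  -- U is not principal (else hnot fails)
  have hnonprin : ∀ p : X, ({p} : Set X) ∉ U := by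
    intro p hp
    apply hnot
    intro ι f _ hf
    apply Filter.mem_of_superset hp
    intro q hq
    simp only [Set.mem_singleton_iff] at hq
    subst hq
    exact Set.mem_iInter.2 fun i => by
      have := Filter.inter_mem hp (hf i)
      rcases U.nonempty_of_mem this with ⟨z, hz1, hz2⟩
      simp only [Set.mem_singleton_iff] at hz1
      subst hz1; exact hz2
  -- the injective rank function G
  let r : X → X → Prop := WellOrderingRel
  let G : X → Ordinal.{u} := fun x => Ordinal.typein r x
  have hGinj : Function.Injective G := Ordinal.typein_injective r
  have hG : ∀ α : Ordinal.{u}, {x | G x = α} ∉ U := by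
    intro α hα
    rcases U.nonempty_of_mem hα with ⟨p, (hp : G p = α)⟩
    apply hnonprin p
    apply Filter.mem_of_superset hα
    intro q (hq : G q = α)
    have : G q = G p := by rw [hq, hp]
    simp [hGinj this]
  -- the threshold γ
  have hSne : {β : Ordinal.{u} | {x | G x < β} ∈ U}.Nonempty := by
    refine ⟨Ordinal.type r, ?_⟩
    have : {x | G x < Ordinal.type r} = Set.univ := by
      ext x; simp [Ordinal.typein_lt_type r x, G]
    show {x | G x < Ordinal.type r} ∈ U
    rw [this]; exact Filter.univ_mem
  set S : Set Ordinal.{u} := {β : Ordinal.{u} | {x | G x < β} ∈ U} with hS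
  let γ : Ordinal.{u} := wellFounded_lt.min S hSne
  have hγS : {x | G x < γ} ∈ U := wellFounded_lt.min_mem S hSne
  have hγmin : ∀ β < γ, {x | G x < β} ∉ U := by
    intro β hβ hmem
    exact wellFounded_lt.not_lt_min S hmem hβ
  -- γ is a limit: successors of ordinals below γ stay below γ
  have hlim : ∀ α < γ, Order.succ α < γ := by
    intro α hα
    rcases lt_or_eq_of_le (Order.succ_le_of_lt hα) with h | h
    · exact h
    · exfalso
      have hsucc : {x | G x < Order.succ α} ∈ U := by rw [h]; exact hγS
      have hcompl : {x | G x < α}ᶜ ∈ U :=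
        Ultrafilter.compl_mem_iff_notMem.2 (hγmin α hα)
      have : {x | G x = α} ∈ U := by
        apply Filter.mem_of_superset (Filter.inter_mem hsucc hcompl)
        rintro x ⟨hx1, hx2⟩
        simp only [Set.mem_compl_iff, Set.mem_setOf_eq, not_lt] at hx1 hx2 ⊢
        exact le_antisymm (Order.lt_succ_iff.1 hx1) hx2
      exact hG α this
  -- D₀ : for U-a.e. y, Z y concentrates below G y
  have hL : {x | {y | G x < G y} ∈ U} ∈ U := by
    apply Filter.mem_of_superset hγS
    intro x (hx : G x < γ)
    have h1 : {y | G y < Order.succ (G x)} ∉ U := hγmin _ (hlim _ hx)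
    have h2 : {y | G y < Order.succ (G x)}ᶜ ∈ U :=
      Ultrafilter.compl_mem_iff_notMem.2 h1
    apply Filter.mem_of_superset h2
    intro y hy
    simp only [Set.mem_compl_iff, Set.mem_setOf_eq, not_lt, Order.succ_le_iff] at hy ⊢
    exact hy
  have hD₀ : {y | {x | G x < G y} ∈ Z y} ∈ U := (hswap fun x y => G x < G y).1 hL
  -- the hereditarily large set E
  let Ek : ℕ → Set X := fun k => Nat.rec {y | {x | G x < G y} ∈ Z y}
    (fun _ Ei => Ei ∩ {y | Ei ∈ Z y}) k
  have hEkU : ∀ k, Ek k ∈ U := by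
    intro k
    induction k with
    | zero => exact hD₀
    | succ n ih => exact Filter.inter_mem ih ((star (Ek n)).1 ih)
  have hEU : (⋂ k, Ek k) ∈ U := hcc Ek hEkU
  set E : Set X := ⋂ k, Ek k with hE
  have hEZ : ∀ y ∈ E, E ∈ Z y := by
    intro y hy
    refine hZcc y Ek fun k => ?_
    have : y ∈ Ek (k + 1) := Set.mem_iInter.1 hy (k + 1)
    exact this.2
  have hED₀ : ∀ y ∈ E, {x | G x < G y} ∈ Z y := by
    intro y hy
    exact Set.mem_iInter.1 hy 0
  -- build a descending sequence
  have key : ∀ x ∈ E, ∃ x', x' ∈ E ∧ G x' < G x := by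
    intro x hx
    have : E ∩ {x' | G x' < G x} ∈ Z x :=
      Filter.inter_mem (hEZ x hx) (hED₀ x hx)
    rcases (Z x).nonempty_of_mem this with ⟨x', hx'1, hx'2⟩
    exact ⟨x', hx'1, hx'2⟩
  rcases U.nonempty_of_mem hEU with ⟨x₀, hx₀⟩
  let seq : ℕ → {x // x ∈ E} := fun n => Nat.rec ⟨x₀, hx₀⟩
    (fun _ p => ⟨(key p.1 p.2).choose, (key p.1 p.2).choose_spec.1⟩) n
  have hdesc : ∀ n, G (seq (n + 1)).1 < G (seq n).1 := by
    intro n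
    exact (key (seq n).1 (seq n).2).choose_spec.2
  -- contradiction with well-foundedness of ordinals
  have hne : (Set.range fun n => G (seq n).1).Nonempty := ⟨_, ⟨0, rfl⟩⟩
  obtain ⟨n, hn⟩ := wellFounded_lt.min_mem _ hne
  exact wellFounded_lt.not_lt_min (Set.range fun n => G (seq n).1) ⟨n + 1, rfl⟩ (hn ▸ hdesc n)
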